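/- arXiv:0801.1966 — 2 statements merged into one kernel-verified Lean document; each statement's English description precedes it below -/
import Mathlib

section
/- Let B be a Banach limit on ℕ, let X be a nonempty set, let L be a coherent lower prevision on X, and let T : X → X be any map. For each gamble f on X, define the gamble f_L on ℕ by f_L(n) = L(f∘T^n) (where T^n is the n-fold composition of T; f_L is bounded since inf f ≤ L(f∘T^n) ≤ sup f), and define L_B(f) := B(f_L). Then: (1) L_B is a coherent lower prevision on X satisfying L_B(f∘T) = L_B(f) for every gamble f; (2) if L point-wise dominates a coherent lower prevision A on all gambles with A(f∘T) ≥ A(f) for all gambles f, then L_B point-wise dominates A; (3) if L = P is a coherent prevision, then P_B is a coherent prevision on X with P_B(f∘T) = P_B(f) for every gamble f; (4) if L = P is a coherent prevision with P(f∘T) = P(f) for every gamble f, then P_B = P. -/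
def IsGamble {X : Type*} (f : X → ℝ) : Prop :=
  BddAbove (Set.range f) ∧ BddBelow (Set.range f)

def IsCoherentLowerPrevision {X : Type*} (L : (X → ℝ) → ℝ) : Prop :=
  (∀ f : X → ℝ, IsGamble f → sInf (Set.range f) ≤ L f) ∧
  (∀ f g : X → ℝ, IsGamble f → IsGamble g → L f + L g ≤ L (f + g)) ∧
  (∀ f : X → ℝ, IsGamble f → ∀ c : ℝ, 0 ≤ c → L (c • f) = c * L f)

def IsCoherentPrevision {X : Type*} (P : (X → ℝ) → ℝ) : Prop :=
  (∀ f g : X → ℝ, IsGamble f → IsGamble g → P (f + g) = P f + P g) ∧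
  (∀ f : X → ℝ, IsGamble f → sInf (Set.range f) ≤ P f)

def IsTransformationMonoid {X : Type*} (𝒯 : Set (X → X)) : Prop :=
  id ∈ 𝒯 ∧ ∀ S ∈ 𝒯, ∀ T ∈ 𝒯, S ∘ T ∈ 𝒯

def Dominating {X : Type*} (L : (X → ℝ) → ℝ) : Set ((X → ℝ) → ℝ) :=
  {P | IsCoherentPrevision P ∧ ∀ f : X → ℝ, IsGamble f → L f ≤ P f}

def IsBanachLimit (B : (ℕ → ℝ) → ℝ) : Prop :=
  IsCoherentPrevision B ∧
  ∀ g : ℕ → ℝ, IsGamble g → B (fun n => g (n + 1)) = B g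

noncomputable def transferLB {X : Type*} (B : (ℕ → ℝ) → ℝ) (L : (X → ℝ) → ℝ)
    (T : X → X) : (X → ℝ) → ℝ :=
  fun f => B (fun n => L (f ∘ T^[n]))

lemma isGamble_iff {X : Type*} (f : X → ℝ) :
    IsGamble f ↔ ∃ C : ℝ, ∀ x, |f x| ≤ C := by
  constructor
  · rintro ⟨⟨a, ha⟩, ⟨b, hb⟩⟩
    refine ⟨max |a| |b|, fun x => abs_le.2 ⟨?_, ?_⟩⟩
    · have := hb ⟨x, rfl⟩
      have : -|b| ≤ f x := le_trans (neg_abs_le b) this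
      linarith [le_max_right |a| |b|]
    · exact le_trans (ha ⟨x, rfl⟩) (le_trans (le_abs_self a) (le_max_left _ _))
  · rintro ⟨C, hC⟩
    constructor
    · exact ⟨C, by rintro _ ⟨x, rfl⟩; exact (abs_le.1 (hC x)).2⟩
    · exact ⟨-C, by rintro _ ⟨x, rfl⟩; exact (abs_le.1 (hC x)).1⟩

lemma IsGamble.comp {X Y : Type*} {f : X → ℝ} (hf : IsGamble f) (g : Y → X) :
    IsGamble (f ∘ g) :=
  ⟨hf.1.mono (Set.range_comp_subset_range g f),
   hf.2.mono (Set.range_comp_subset_range g f)⟩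

lemma IsGamble.add {X : Type*} {f g : X → ℝ} (hf : IsGamble f) (hg : IsGamble g) :
    IsGamble (f + g) := by
  obtain ⟨C, hC⟩ := (isGamble_iff f).1 hf
  obtain ⟨D, hD⟩ := (isGamble_iff g).1 hg
  exact (isGamble_iff _).2 ⟨C + D, fun x => by
    simpa using (abs_add_le (f x) (g x)).trans (add_le_add (hC x) (hD x))⟩

lemma IsGamble.neg {X : Type*} {f : X → ℝ} (hf : IsGamble f) : IsGamble (-f) := by
  obtain ⟨C, hC⟩ := (isGamble_iff f).1 hf
  exact (isGamble_iff _).2 ⟨C, fun x => by simpa using hC x⟩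

lemma IsGamble.smul {X : Type*} {f : X → ℝ} (hf : IsGamble f) (c : ℝ) :
    IsGamble (c • f) := by
  obtain ⟨C, hC⟩ := (isGamble_iff f).1 hf
  refine (isGamble_iff _).2 ⟨|c| * C, fun x => ?_⟩
  simp only [Pi.smul_apply, smul_eq_mul, abs_mul]
  exact mul_le_mul_of_nonneg_left (hC x) (abs_nonneg c)

lemma IsGamble.const {X : Type*} (c : ℝ) : IsGamble (fun _ : X => c) :=
  (isGamble_iff _).2 ⟨|c|, fun _ => le_rfl⟩

lemma IsGamble.zero {X : Type*} : IsGamble (0 : X → ℝ) := by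
  exact IsGamble.const (X := X) 0

lemma sInf_range_le {X : Type*} {f : X → ℝ} (hf : IsGamble f) (x : X) :
    sInf (Set.range f) ≤ f x := csInf_le hf.2 ⟨x, rfl⟩

lemma le_sSup_range {X : Type*} {f : X → ℝ} (hf : IsGamble f) (x : X) :
    f x ≤ sSup (Set.range f) := le_csSup hf.1 ⟨x, rfl⟩

section Prev
variable {X : Type*} [Nonempty X] {P : (X → ℝ) → ℝ}

set_option linter.unusedSectionVars false

lemma prev_zero (hP : IsCoherentPrevision P) : P 0 = 0 := by
  have := hP.1 0 0 IsGamble.zero IsGamble.zero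
  simp at this; linarith

lemma prev_neg (hP : IsCoherentPrevision P) {f : X → ℝ} (hf : IsGamble f) :
    P (-f) = -P f := by
  have h := hP.1 f (-f) hf hf.neg
  rw [add_neg_cancel, prev_zero hP] at h
  linarith

lemma prev_le_sSup (hP : IsCoherentPrevision P) {f : X → ℝ} (hf : IsGamble f) :
    P f ≤ sSup (Set.range f) := by
  have h1 : sInf (Set.range (-f)) ≤ P (-f) := hP.2 (-f) hf.neg
  have h2 : -sSup (Set.range f) ≤ sInf (Set.range (-f)) := by
    apply le_csInf (Set.range_nonempty _)
    rintro _ ⟨x, rfl⟩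
    simpa using le_sSup_range hf x
  rw [prev_neg hP hf] at h1
  linarith

lemma prev_mono (hP : IsCoherentPrevision P) {f g : X → ℝ} (hf : IsGamble f)
    (hg : IsGamble g) (hfg : ∀ x, f x ≤ g x) : P f ≤ P g := by
  have h : g = f + (g + -f) := by funext x; simp
  have hgf : IsGamble (g + -f) := hg.add hf.neg
  have h2 : (0:ℝ) ≤ sInf (Set.range (g + -f)) := by
    apply le_csInf (Set.range_nonempty _)
    rintro _ ⟨x, rfl⟩
    simpa using hfg x
  have h3 := hP.2 _ hgf
  calc P f ≤ P f + P (g + -f) := by linarith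
    _ = P (f + (g + -f)) := (hP.1 f _ hf hgf).symm
    _ = P g := by rw [← h]

lemma prev_const (hP : IsCoherentPrevision P) (c : ℝ) :
    P (fun _ => c) = c := by
  have h1 := hP.2 (fun _ => c) (IsGamble.const c)
  have h2 := prev_le_sSup hP (IsGamble.const c)
  have hr : Set.range (fun _ : X => c) = {c} := Set.range_const
  rw [hr, csInf_singleton] at h1
  rw [hr, csSup_singleton] at h2
  linarith

lemma prev_abs_bound (hP : IsCoherentPrevision P) {f : X → ℝ} (hf : IsGamble f)
    {C : ℝ} (hC : ∀ x, |f x| ≤ C) : |P f| ≤ C := by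
  have h1 : -C ≤ sInf (Set.range f) := by
    apply le_csInf (Set.range_nonempty _)
    rintro _ ⟨x, rfl⟩; exact (abs_le.1 (hC x)).1
  have h2 : sSup (Set.range f) ≤ C :=
    csSup_le (Set.range_nonempty _) (by rintro _ ⟨x, rfl⟩; exact (abs_le.1 (hC x)).2)
  have := hP.2 f hf
  have := prev_le_sSup hP hf
  rw [abs_le]; constructor <;> linarith

lemma prev_smul (hP : IsCoherentPrevision P) {f : X → ℝ} (hf : IsGamble f) (c : ℝ) :
    P (c • f) = c * P f := by
  obtain ⟨C, hC⟩ := (isGamble_iff f).1 hf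
  have hC0 : 0 ≤ C := le_trans (abs_nonneg _) (hC (Classical.arbitrary X))
  have hadd : ∀ a b : ℝ, P ((a + b) • f) = P (a • f) + P (b • f) := by
    intro a b
    rw [add_smul]
    exact hP.1 _ _ (hf.smul a) (hf.smul b)
  set h : ℝ →+ ℝ := AddMonoidHom.mk' (fun a => P (a • f)) hadd with hh
  have hbound : ∀ a : ℝ, |h a| ≤ |a| * C := by
    intro a
    refine prev_abs_bound hP (hf.smul a) (fun x => ?_)
    simp only [Pi.smul_apply, smul_eq_mul, abs_mul]
    exact mul_le_mul_of_nonneg_left (hC x) (abs_nonneg a)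
  have hlip : LipschitzWith (Real.toNNReal C) h := by
    apply LipschitzWith.of_dist_le_mul
    intro a b
    rw [Real.dist_eq, Real.dist_eq, ← map_sub]
    calc |h (a - b)| ≤ |a - b| * C := hbound _
      _ = (Real.toNNReal C) * |a - b| := by
          rw [Real.coe_toNNReal _ hC0]; ring
  have this1 := (h.toRealLinearMap hlip.continuous).map_smul c 1
  have hco : ⇑(h.toRealLinearMap hlip.continuous) = ⇑h :=
    AddMonoidHom.coe_toRealLinearMap h hlip.continuous
  have h2 : h (c • (1:ℝ)) = c • h 1 := by
    have e1 := congrFun hco (c • (1:ℝ))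
    have e2 := congrFun hco (1:ℝ)
    rw [← e1, ← e2]
    exact this1
  simp only [smul_eq_mul, mul_one] at h2
  have h3 : h c = P (c • f) := rfl
  have h4 : h 1 = P f := by show P ((1:ℝ) • f) = P f; rw [one_smul]
  rw [h3, h4] at h2
  exact h2
end Prev

section Main
variable {X : Type*} [Nonempty X]
set_option linter.unusedSectionVars false

lemma lp_zero {L : (X → ℝ) → ℝ} (hL : IsCoherentLowerPrevision L) : L 0 = 0 := by
  have := hL.2.2 0 IsGamble.zero 0 le_rfl
  simpa using this

lemma lp_le_sSup {L : (X → ℝ) → ℝ} (hL : IsCoherentLowerPrevision L)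
    {f : X → ℝ} (hf : IsGamble f) : L f ≤ sSup (Set.range f) := by
  have h := hL.2.1 f (-f) hf hf.neg
  rw [add_neg_cancel, lp_zero hL] at h
  have h1 : sInf (Set.range (-f)) ≤ L (-f) := hL.1 (-f) hf.neg
  have h2 : -sSup (Set.range f) ≤ sInf (Set.range (-f)) := by
    apply le_csInf (Set.range_nonempty _)
    rintro _ ⟨x, rfl⟩
    simpa using le_sSup_range hf x
  linarith

lemma gL_abs {L : (X → ℝ) → ℝ} (hL : IsCoherentLowerPrevision L) (T : X → X)
    {f : X → ℝ} (hf : IsGamble f) (n : ℕ) :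
    sInf (Set.range f) ≤ L (f ∘ T^[n]) ∧ L (f ∘ T^[n]) ≤ sSup (Set.range f) := by
  have hfn : IsGamble (f ∘ T^[n]) := hf.comp _
  constructor
  · refine le_trans ?_ (hL.1 _ hfn)
    apply le_csInf (Set.range_nonempty _)
    rintro _ ⟨x, rfl⟩
    exact sInf_range_le hf _
  · refine le_trans (lp_le_sSup hL hfn) ?_
    apply csSup_le (Set.range_nonempty _)
    rintro _ ⟨x, rfl⟩
    exact le_sSup_range hf _

lemma gL_gamble {L : (X → ℝ) → ℝ} (hL : IsCoherentLowerPrevision L) (T : X → X)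
    {f : X → ℝ} (hf : IsGamble f) : IsGamble (fun n => L (f ∘ T^[n])) := by
  refine (isGamble_iff _).2 ⟨max |sInf (Set.range f)| |sSup (Set.range f)|, fun n => ?_⟩
  obtain ⟨h1, h2⟩ := gL_abs hL T hf n
  rw [abs_le]
  constructor
  · calc -(max |sInf (Set.range f)| |sSup (Set.range f)|)
        ≤ -|sInf (Set.range f)| := by simp [le_max_left]
      _ ≤ sInf (Set.range f) := neg_abs_le _
      _ ≤ _ := h1
  · exact h2.trans ((le_abs_self _).trans (le_max_right _ _))

theorem stmt16' (B : (ℕ → ℝ) → ℝ) (hB : IsBanachLimit B)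
    (L : (X → ℝ) → ℝ) (hL : IsCoherentLowerPrevision L) (T : X → X) :
    (IsCoherentLowerPrevision (transferLB B L T) ∧
      ∀ f : X → ℝ, IsGamble f → transferLB B L T (f ∘ T) = transferLB B L T f) ∧
    (∀ A : (X → ℝ) → ℝ, IsCoherentLowerPrevision A →
      (∀ f : X → ℝ, IsGamble f → A f ≤ A (f ∘ T)) →
      (∀ f : X → ℝ, IsGamble f → A f ≤ L f) →
      ∀ f : X → ℝ, IsGamble f → A f ≤ transferLB B L T f) ∧
    (IsCoherentPrevision L →
      (IsCoherentPrevision (transferLB B L T) ∧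
        ∀ f : X → ℝ, IsGamble f → transferLB B L T (f ∘ T) = transferLB B L T f)) ∧
    (IsCoherentPrevision L → (∀ f : X → ℝ, IsGamble f → L (f ∘ T) = L f) →
      ∀ f : X → ℝ, IsGamble f → transferLB B L T f = L f) := by
  have hBp : IsCoherentPrevision B := hB.1
  -- shift invariance (used twice)
  have hshift : ∀ f : X → ℝ, IsGamble f → transferLB B L T (f ∘ T) = transferLB B L T f := by
    intro f hf
    have hg : IsGamble (fun n => L (f ∘ T^[n])) := gL_gamble hL T hf
    have key : (fun n => L ((f ∘ T) ∘ T^[n])) = fun n => L (f ∘ T^[n+1]) := by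
      funext n
      congr 1
      funext x
      show f (T (T^[n] x)) = f (T^[n+1] x)
      rw [Function.iterate_succ_apply']
    show B (fun n => L ((f ∘ T) ∘ T^[n])) = B (fun n => L (f ∘ T^[n]))
    rw [key]
    exact hB.2 _ hg
  have hlow : ∀ f : X → ℝ, IsGamble f → sInf (Set.range f) ≤ transferLB B L T f := by
    intro f hf
    have hg : IsGamble (fun n => L (f ∘ T^[n])) := gL_gamble hL T hf
    refine le_trans ?_ (hBp.2 _ hg)
    apply le_csInf (Set.range_nonempty _)
    rintro _ ⟨n, rfl⟩
    exact (gL_abs hL T hf n).1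
  refine ⟨⟨⟨hlow, ?_, ?_⟩, hshift⟩, ?_, ?_, ?_⟩
  · -- superadditivity
    intro f g hf hg
    have hgf : IsGamble (fun n => L (f ∘ T^[n])) := gL_gamble hL T hf
    have hgg : IsGamble (fun n => L (g ∘ T^[n])) := gL_gamble hL T hg
    have hgfg : IsGamble (fun n => L ((f + g) ∘ T^[n])) := gL_gamble hL T (hf.add hg)
    show B _ + B _ ≤ B _
    rw [← hBp.1 _ _ hgf hgg]
    refine prev_mono hBp (hgf.add hgg) hgfg (fun n => ?_)
    have : (f + g) ∘ T^[n] = f ∘ T^[n] + g ∘ T^[n] := rfl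
    rw [this]
    exact hL.2.1 _ _ (hf.comp _) (hg.comp _)
  · -- homogeneity
    intro f hf c hc
    have hgf : IsGamble (fun n => L (f ∘ T^[n])) := gL_gamble hL T hf
    have key : (fun n => L ((c • f) ∘ T^[n])) = c • (fun n => L (f ∘ T^[n])) := by
      funext n
      have : (c • f) ∘ T^[n] = c • (f ∘ T^[n]) := rfl
      simp only [Pi.smul_apply, smul_eq_mul, this]
      exact hL.2.2 _ (hf.comp _) c hc
    show B _ = c * B _
    rw [key]
    exact prev_smul hBp hgf c
  · -- domination
    intro A hA hAT hAL f hf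
    have hAf : ∀ n, A f ≤ A (f ∘ T^[n]) := by
      intro n
      induction n with
      | zero => simp
      | succ n ih =>
        have h1 := hAT (f ∘ T^[n]) (hf.comp _)
        have h2 : (f ∘ T^[n]) ∘ T = f ∘ T^[n+1] := by
          rw [Function.iterate_succ]
          rfl
        rw [h2] at h1
        exact ih.trans h1
    have hg : IsGamble (fun n => L (f ∘ T^[n])) := gL_gamble hL T hf
    refine le_trans ?_ (hBp.2 _ hg)
    apply le_csInf (Set.range_nonempty _)
    rintro _ ⟨n, rfl⟩
    exact (hAf n).trans (hAL _ (hf.comp _))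
  · -- prevision case
    intro hP
    refine ⟨⟨?_, hlow⟩, hshift⟩
    intro f g hf hg
    have hgf : IsGamble (fun n => L (f ∘ T^[n])) := gL_gamble hL T hf
    have hgg : IsGamble (fun n => L (g ∘ T^[n])) := gL_gamble hL T hg
    have key : (fun n => L ((f + g) ∘ T^[n]))
        = (fun n => L (f ∘ T^[n])) + (fun n => L (g ∘ T^[n])) := by
      funext n
      have : (f + g) ∘ T^[n] = f ∘ T^[n] + g ∘ T^[n] := rfl
      simp only [Pi.add_apply, this]
      exact hP.1 _ _ (hf.comp _) (hg.comp _)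
    show B _ = B _ + B _
    rw [key]
    exact hBp.1 _ _ hgf hgg
  · -- invariant prevision case
    intro hP hinv f hf
    have key : ∀ n, L (f ∘ T^[n]) = L f := by
      intro n
      induction n with
      | zero => simp
      | succ n ih =>
        have h2 : (f ∘ T^[n]) ∘ T = f ∘ T^[n+1] := by
          rw [Function.iterate_succ]; rfl
        rw [← h2, hinv _ (hf.comp _), ih]
    show B _ = L f
    have : (fun n => L (f ∘ T^[n])) = fun _ : ℕ => L f := by
      funext n; exact key n
    rw [this]
    exact prev_const hBp (L f)
end Main

theorem stmt16 (X : Type*) [Nonempty X] (B : (ℕ → ℝ) → ℝ) (hB : IsBanachLimit B)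
    (L : (X → ℝ) → ℝ) (hL : IsCoherentLowerPrevision L) (T : X → X) :
    (IsCoherentLowerPrevision (transferLB B L T) ∧
      ∀ f : X → ℝ, IsGamble f → transferLB B L T (f ∘ T) = transferLB B L T f) ∧
    (∀ A : (X → ℝ) → ℝ, IsCoherentLowerPrevision A →
      (∀ f : X → ℝ, IsGamble f → A f ≤ A (f ∘ T)) →
      (∀ f : X → ℝ, IsGamble f → A f ≤ L f) →
      ∀ f : X → ℝ, IsGamble f → A f ≤ transferLB B L T f) ∧
    (IsCoherentPrevision L →
      (IsCoherentPrevision (transferLB B L T) ∧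
        ∀ f : X → ℝ, IsGamble f → transferLB B L T (f ∘ T) = transferLB B L T f)) ∧
    (IsCoherentPrevision L → (∀ f : X → ℝ, IsGamble f → L (f ∘ T) = L f) →
      ∀ f : X → ℝ, IsGamble f → transferLB B L T f = L f) := by
  exact stmt16' B hB L hL T
end

section
/- Let X be a finite nonempty set and 𝒫 a group of permutations of X. Let 𝒜 denote the set of 𝒫-invariant atoms of X (for a group of permutations these are exactly the orbits of 𝒫 on X), which is a finite partition of X. A coherent lower prevision L on X is strongly 𝒫-invariant (L(f − f∘π) ≥ 0 and L(f∘π − f) ≥ 0 for every gamble f and π ∈ 𝒫) if and only if there exists a coherent lower prevision L₀ on the finite set 𝒜 such that L(f) = L₀( A ↦ (1/|A|) Σ_{x∈A} f(x) ) for every gamble f on X, i.e. L is obtained by applying L₀ to the function sending each invariant atom A to the uniform average of f over A. -/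
open scoped Classical

def InvariantAtoms {X : Type*} (𝒢 : Set (X → X)) : Set (Set X) :=
  {S | ∃ x : X, S = ⋂₀ {A : Set X | (∀ π ∈ 𝒢, π ⁻¹' A = A) ∧ x ∈ A}}

section Aux

lemma gamble_of_finite {Y : Type*} [Finite Y] (f : Y → ℝ) : IsGamble f :=
  ⟨(Set.finite_range f).bddAbove, (Set.finite_range f).bddBelow⟩

lemma L_zero' {Y : Type*} [Finite Y] {L : (Y → ℝ) → ℝ}
    (hL : IsCoherentLowerPrevision L) : L 0 = 0 := by
  have h := hL.2.2 0 (gamble_of_finite _) 0 le_rfl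
  simpa using h

lemma L_sum' {Y : Type*} [Finite Y] {L : (Y → ℝ) → ℝ}
    (hL : IsCoherentLowerPrevision L) {ι : Type*} (s : Finset ι) (h : ι → Y → ℝ) :
    ∑ i ∈ s, L (h i) ≤ L (∑ i ∈ s, h i) := by
  classical
  induction s using Finset.induction_on with
  | empty => simp [L_zero' hL]
  | insert _ _ hx ih =>
    rw [Finset.sum_insert hx, Finset.sum_insert hx]
    exact le_trans (add_le_add_right ih _) (hL.2.1 _ _ (gamble_of_finite _) (gamble_of_finite _))

variable {X : Type*} {𝒢 : Set (X → X)}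

def orb (𝒢 : Set (X → X)) (x : X) : Set X := {y | ∃ π ∈ 𝒢, y = π x}

lemma mem_orb_self (hid : id ∈ 𝒢) (x : X) : x ∈ orb 𝒢 x := ⟨id, hid, rfl⟩

lemma orb_inv (hcomp : ∀ π ∈ 𝒢, ∀ σ ∈ 𝒢, π ∘ σ ∈ 𝒢)
    (hinvcl : ∀ π ∈ 𝒢, ∃ σ ∈ 𝒢, π ∘ σ = id ∧ σ ∘ π = id)
    {π : X → X} (hπ : π ∈ 𝒢) (x : X) : π ⁻¹' orb 𝒢 x = orb 𝒢 x := by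
  ext y
  simp only [Set.mem_preimage, orb, Set.mem_setOf_eq]
  constructor
  · rintro ⟨σ, hσ, hyσ⟩
    obtain ⟨π', hπ', h1, h2⟩ := hinvcl π hπ
    refine ⟨π' ∘ σ, hcomp π' hπ' σ hσ, ?_⟩
    have hy : π' (π y) = y := congrFun h2 y
    simp only [Function.comp_apply, ← hyσ, hy]
  · rintro ⟨σ, hσ, rfl⟩
    exact ⟨π ∘ σ, hcomp π hπ σ hσ, rfl⟩

lemma atom_eq (hid : id ∈ 𝒢) (hcomp : ∀ π ∈ 𝒢, ∀ σ ∈ 𝒢, π ∘ σ ∈ 𝒢)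
    (hinvcl : ∀ π ∈ 𝒢, ∃ σ ∈ 𝒢, π ∘ σ = id ∧ σ ∘ π = id) (x : X) :
    ⋂₀ {A : Set X | (∀ π ∈ 𝒢, π ⁻¹' A = A) ∧ x ∈ A} = orb 𝒢 x := by
  apply le_antisymm
  · exact Set.sInter_subset_of_mem ⟨fun π hπ => orb_inv hcomp hinvcl hπ x, mem_orb_self hid x⟩
  · rintro y ⟨π, hπ, rfl⟩ A hA
    have := hA.1 π hπ
    rw [← this] at hA
    exact hA.2

def atomMk (𝒢 : Set (X → X)) (x : X) : InvariantAtoms 𝒢 :=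
  ⟨⋂₀ {A : Set X | (∀ π ∈ 𝒢, π ⁻¹' A = A) ∧ x ∈ A}, ⟨x, rfl⟩⟩

lemma lift_range (g : InvariantAtoms 𝒢 → ℝ) :
    Set.range (fun x => g (atomMk 𝒢 x)) = Set.range g := by
  ext r
  constructor
  · rintro ⟨x, rfl⟩
    exact ⟨atomMk 𝒢 x, rfl⟩
  · rintro ⟨⟨S, x, hx⟩, rfl⟩
    exact ⟨x, congrArg g (Subtype.ext hx.symm)⟩

lemma toFinset_congr [Finite X] {s t : Set X} (h : s = t) :
    s.toFinite.toFinset = t.toFinite.toFinset := by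
  subst h; rfl

end Aux

section Count

variable {X : Type*} [Fintype X] {𝒢 : Set (X → X)}

lemma mem_Gfin {π : X → X} : π ∈ 𝒢.toFinite.toFinset ↔ π ∈ 𝒢 := Set.Finite.mem_toFinset _

lemma mem_Ofin {x y : X} : y ∈ (orb 𝒢 x).toFinite.toFinset ↔ y ∈ orb 𝒢 x :=
  Set.Finite.mem_toFinset _

lemma fiber_card_eq (hcomp : ∀ π ∈ 𝒢, ∀ σ ∈ 𝒢, π ∘ σ ∈ 𝒢)
    (hinvcl : ∀ π ∈ 𝒢, ∃ σ ∈ 𝒢, π ∘ σ = id ∧ σ ∘ π = id)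
    {x y : X} (hy : y ∈ orb 𝒢 x) :
    (𝒢.toFinite.toFinset.filter fun π => π x = y).card
      = (𝒢.toFinite.toFinset.filter fun π => π x = x).card := by
  obtain ⟨σ, hσ, rfl⟩ := hy
  obtain ⟨σ', hσ', h1, h2⟩ := hinvcl σ hσ
  refine Finset.card_bij' (fun ρ _ => σ' ∘ ρ) (fun π _ => σ ∘ π) ?_ ?_ ?_ ?_
  · intro ρ hρ
    obtain ⟨hρG, hρx⟩ := Finset.mem_filter.mp hρ
    refine Finset.mem_filter.mpr ⟨mem_Gfin.mpr (hcomp σ' hσ' ρ (mem_Gfin.mp hρG)), ?_⟩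
    simp only [Function.comp_apply, hρx]
    exact congrFun h2 x
  · intro π hπ
    obtain ⟨hπG, hπx⟩ := Finset.mem_filter.mp hπ
    refine Finset.mem_filter.mpr ⟨mem_Gfin.mpr (hcomp σ hσ π (mem_Gfin.mp hπG)), ?_⟩
    simp only [Function.comp_apply, hπx]
  · intro ρ _
    ext z
    simp only [Function.comp_apply]
    exact congrFun h1 (ρ z)
  · intro π _
    ext z
    simp only [Function.comp_apply]
    exact congrFun h2 (π z)

lemma sum_group_eq (hcomp : ∀ π ∈ 𝒢, ∀ σ ∈ 𝒢, π ∘ σ ∈ 𝒢)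
    (hinvcl : ∀ π ∈ 𝒢, ∃ σ ∈ 𝒢, π ∘ σ = id ∧ σ ∘ π = id)
    (f : X → ℝ) (x : X) :
    ∑ π ∈ 𝒢.toFinite.toFinset, f (π x)
      = ((𝒢.toFinite.toFinset.filter fun π => π x = x).card : ℝ)
        * ∑ y ∈ (orb 𝒢 x).toFinite.toFinset, f y := by
  have hmap : ∀ π ∈ 𝒢.toFinite.toFinset, π x ∈ (orb 𝒢 x).toFinite.toFinset := by
    intro π hπ
    exact mem_Ofin.mpr ⟨π, mem_Gfin.mp hπ, rfl⟩
  rw [← Finset.sum_fiberwise_of_maps_to hmap (fun π => f (π x))]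
  rw [Finset.mul_sum]
  refine Finset.sum_congr rfl fun y hy => ?_
  have : ∀ π ∈ 𝒢.toFinite.toFinset.filter fun π => π x = y, f (π x) = f y := by
    intro π hπ
    rw [(Finset.mem_filter.mp hπ).2]
  rw [Finset.sum_congr rfl this, Finset.sum_const, nsmul_eq_mul,
    fiber_card_eq hcomp hinvcl (mem_Ofin.mp hy)]

lemma card_group_eq (hcomp : ∀ π ∈ 𝒢, ∀ σ ∈ 𝒢, π ∘ σ ∈ 𝒢)
    (hinvcl : ∀ π ∈ 𝒢, ∃ σ ∈ 𝒢, π ∘ σ = id ∧ σ ∘ π = id) (x : X) :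
    (𝒢.toFinite.toFinset.card : ℝ)
      = ((𝒢.toFinite.toFinset.filter fun π => π x = x).card : ℝ)
        * ((orb 𝒢 x).toFinite.toFinset.card : ℝ) := by
  have := sum_group_eq hcomp hinvcl (fun _ => (1 : ℝ)) x
  simpa using this

lemma avg_eq_groupavg (hid : id ∈ 𝒢) (hcomp : ∀ π ∈ 𝒢, ∀ σ ∈ 𝒢, π ∘ σ ∈ 𝒢)
    (hinvcl : ∀ π ∈ 𝒢, ∃ σ ∈ 𝒢, π ∘ σ = id ∧ σ ∘ π = id)
    (f : X → ℝ) (x : X) :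
    (∑ y ∈ (orb 𝒢 x).toFinite.toFinset, f y) / (((orb 𝒢 x).toFinite.toFinset.card : ℕ) : ℝ)
      = (∑ π ∈ 𝒢.toFinite.toFinset, f (π x)) / ((𝒢.toFinite.toFinset.card : ℕ) : ℝ) := by
  have hs : (0 : ℝ) < ((𝒢.toFinite.toFinset.filter fun π => π x = x).card : ℝ) := by
    have : id ∈ 𝒢.toFinite.toFinset.filter fun π => π x = x :=
      Finset.mem_filter.mpr ⟨mem_Gfin.mpr hid, rfl⟩
    exact_mod_cast Finset.card_pos.mpr ⟨id, this⟩
  rw [sum_group_eq hcomp hinvcl, card_group_eq hcomp hinvcl x]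
  exact (mul_div_mul_left _ _ (ne_of_gt hs)).symm

lemma L_group_avg {L : (X → ℝ) → ℝ} (hid : id ∈ 𝒢)
    (hL : IsCoherentLowerPrevision L)
    (hinv : ∀ f : X → ℝ, ∀ π ∈ 𝒢, 0 ≤ L (f - f ∘ π) ∧ 0 ≤ L (f ∘ π - f))
    (f : X → ℝ) :
    L (fun x => (∑ π ∈ 𝒢.toFinite.toFinset, f (π x)) / ((𝒢.toFinite.toFinset.card : ℕ) : ℝ))
      = L f := by
  classical
  set G := 𝒢.toFinite.toFinset with hG
  have hN : (0 : ℝ) < (G.card : ℝ) := by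
    exact_mod_cast Finset.card_pos.mpr ⟨id, mem_Gfin.mpr hid⟩
  set F : X → ℝ := fun x => (∑ π ∈ G, f (π x)) / ((G.card : ℕ) : ℝ) with hF
  have key1 : ∑ π ∈ G, (f - f ∘ π) = (G.card : ℝ) • (f - F) := by
    funext x
    simp only [Finset.sum_apply, Pi.sub_apply, Function.comp_apply, Pi.smul_apply,
      smul_eq_mul, hF]
    rw [Finset.sum_sub_distrib, Finset.sum_const, nsmul_eq_mul]
    field_simp
  have key2 : ∑ π ∈ G, (f ∘ π - f) = (G.card : ℝ) • (F - f) := by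
    funext x
    simp only [Finset.sum_apply, Pi.sub_apply, Function.comp_apply, Pi.smul_apply,
      smul_eq_mul, hF]
    rw [Finset.sum_sub_distrib, Finset.sum_const, nsmul_eq_mul]
    field_simp
  have h1 : 0 ≤ L (f - F) := by
    have h0 : 0 ≤ ∑ π ∈ G, L (f - f ∘ π) :=
      Finset.sum_nonneg fun π hπ => (hinv f π (mem_Gfin.mp hπ)).1
    have h2 : 0 ≤ L (∑ π ∈ G, (f - f ∘ π)) := le_trans h0 (L_sum' hL G _)
    rw [key1, hL.2.2 _ (gamble_of_finite _) _ (le_of_lt hN)] at h2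
    nlinarith
  have h2 : 0 ≤ L (F - f) := by
    have h0 : 0 ≤ ∑ π ∈ G, L (f ∘ π - f) :=
      Finset.sum_nonneg fun π hπ => (hinv f π (mem_Gfin.mp hπ)).2
    have h2 : 0 ≤ L (∑ π ∈ G, (f ∘ π - f)) := le_trans h0 (L_sum' hL G _)
    rw [key2, hL.2.2 _ (gamble_of_finite _) _ (le_of_lt hN)] at h2
    nlinarith
  have e1 : f + (F - f) = F := by funext x; simp
  have e2 : F + (f - F) = f := by funext x; simp
  apply le_antisymm
  · have := hL.2.1 F (f - F) (gamble_of_finite _) (gamble_of_finite _)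
    rw [e2] at this
    linarith
  · have := hL.2.1 f (F - f) (gamble_of_finite _) (gamble_of_finite _)
    rw [e1] at this
    linarith

end Count

section Avg

variable {X : Type*} [Fintype X] {𝒢 : Set (X → X)}

noncomputable def avgA (𝒢 : Set (X → X)) (f : X → ℝ) : InvariantAtoms 𝒢 → ℝ :=
  fun A => (∑ x ∈ A.1.toFinite.toFinset, f x) / (A.1.ncard : ℝ)

lemma avgA_add (f g : X → ℝ) : avgA 𝒢 (f + g) = avgA 𝒢 f + avgA 𝒢 g := by
  funext A
  simp only [avgA, Pi.add_apply]
  rw [Finset.sum_add_distrib, add_div]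

lemma avgA_smul (c : ℝ) (f : X → ℝ) : avgA 𝒢 (c • f) = c • avgA 𝒢 f := by
  funext A
  simp only [avgA, Pi.smul_apply, smul_eq_mul]
  rw [← Finset.mul_sum, mul_div_assoc]

lemma avgA_sub (f g : X → ℝ) : avgA 𝒢 (f - g) = avgA 𝒢 f - avgA 𝒢 g := by
  funext A
  simp only [avgA, Pi.sub_apply]
  rw [Finset.sum_sub_distrib, sub_div]

lemma avgA_lb [Nonempty X] (hid : id ∈ 𝒢) (hcomp : ∀ π ∈ 𝒢, ∀ σ ∈ 𝒢, π ∘ σ ∈ 𝒢)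
    (hinvcl : ∀ π ∈ 𝒢, ∃ σ ∈ 𝒢, π ∘ σ = id ∧ σ ∘ π = id)
    (f : X → ℝ) (A : InvariantAtoms 𝒢) :
    sInf (Set.range f) ≤ avgA 𝒢 f A := by
  obtain ⟨x, hx⟩ := A.2
  have hAval : A.1 = orb 𝒢 x := hx.trans (atom_eq hid hcomp hinvcl x)
  have hxA : x ∈ A.1.toFinite.toFinset := by
    rw [Set.Finite.mem_toFinset, hAval]
    exact mem_orb_self hid x
  have hpos : 0 < A.1.toFinite.toFinset.card := Finset.card_pos.mpr ⟨x, hxA⟩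
  have hb : ∀ y, sInf (Set.range f) ≤ f y := fun y =>
    csInf_le (Set.finite_range f).bddBelow ⟨y, rfl⟩
  have hsum : (A.1.toFinite.toFinset.card : ℝ) * sInf (Set.range f)
      ≤ ∑ y ∈ A.1.toFinite.toFinset, f y := by
    calc (A.1.toFinite.toFinset.card : ℝ) * sInf (Set.range f)
        = ∑ _y ∈ A.1.toFinite.toFinset, sInf (Set.range f) := by
          rw [Finset.sum_const, nsmul_eq_mul]
      _ ≤ ∑ y ∈ A.1.toFinite.toFinset, f y := Finset.sum_le_sum fun y _ => hb y
  show sInf (Set.range f) ≤ (∑ y ∈ A.1.toFinite.toFinset, f y) / (A.1.ncard : ℝ)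
  rw [Set.ncard_eq_toFinset_card A.1 A.1.toFinite,
    le_div_iff₀ (by exact_mod_cast hpos)]
  linarith [hsum]

lemma avgA_comp (hcomp : ∀ π ∈ 𝒢, ∀ σ ∈ 𝒢, π ∘ σ ∈ 𝒢)
    (hinvcl : ∀ π ∈ 𝒢, ∃ σ ∈ 𝒢, π ∘ σ = id ∧ σ ∘ π = id)
    (hid : id ∈ 𝒢) {π : X → X} (hπ : π ∈ 𝒢) (f : X → ℝ) :
    avgA 𝒢 (f ∘ π) = avgA 𝒢 f := by
  funext A
  obtain ⟨x, hx⟩ := A.2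
  have hAval : A.1 = orb 𝒢 x := hx.trans (atom_eq hid hcomp hinvcl x)
  show (∑ y ∈ A.1.toFinite.toFinset, f (π y)) / (A.1.ncard : ℝ)
      = (∑ y ∈ A.1.toFinite.toFinset, f y) / (A.1.ncard : ℝ)
  congr 1
  obtain ⟨σ, hσ, h1, h2⟩ := hinvcl π hπ
  have hmem : ∀ y : X, y ∈ A.1.toFinite.toFinset ↔ y ∈ orb 𝒢 x := by
    intro y
    rw [Set.Finite.mem_toFinset, hAval]
  refine Finset.sum_bij' (fun a _ => π a) (fun a _ => σ a) ?_ ?_ ?_ ?_ ?_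
  · intro a ha
    rw [hmem] at ha ⊢
    rw [← orb_inv hcomp hinvcl hπ x] at ha
    exact ha
  · intro a ha
    rw [hmem] at ha ⊢
    rw [← orb_inv hcomp hinvcl hσ x] at ha
    exact ha
  · intro a _
    exact congrFun h2 a
  · intro a _
    exact congrFun h1 a
  · intro a _
    rfl

end Avg

theorem stmt19 (X : Type*) [Fintype X] [Nonempty X] (𝒢 : Set (X → X))
    (hbij : ∀ π ∈ 𝒢, Function.Bijective π) (hid : id ∈ 𝒢)
    (hcomp : ∀ π ∈ 𝒢, ∀ σ ∈ 𝒢, π ∘ σ ∈ 𝒢)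
    (hinvcl : ∀ π ∈ 𝒢, ∃ σ ∈ 𝒢, π ∘ σ = id ∧ σ ∘ π = id)
    (L : (X → ℝ) → ℝ) :
    (IsCoherentLowerPrevision L ∧
      ∀ f : X → ℝ, ∀ π ∈ 𝒢, 0 ≤ L (f - f ∘ π) ∧ 0 ≤ L (f ∘ π - f)) ↔
    (∃ L₀ : (InvariantAtoms 𝒢 → ℝ) → ℝ, IsCoherentLowerPrevision L₀ ∧
      ∀ f : X → ℝ, L f = L₀ (fun A =>
        (∑ x ∈ A.1.toFinite.toFinset, f x) / (A.1.ncard : ℝ))) := by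
  haveI : Finite (InvariantAtoms 𝒢) := Subtype.finite
  constructor
  · rintro ⟨hL, hinv⟩
    refine ⟨fun g => L (fun x => g (atomMk 𝒢 x)), ⟨?_, ?_, ?_⟩, ?_⟩
    · intro g _
      rw [← lift_range g]
      exact hL.1 _ (gamble_of_finite _)
    · intro g g' _ _
      exact hL.2.1 _ _ (gamble_of_finite _) (gamble_of_finite _)
    · intro g _ c hc
      exact hL.2.2 _ (gamble_of_finite _) c hc
    · intro f
      show L f = L (fun x => (∑ y ∈ (atomMk 𝒢 x).1.toFinite.toFinset, f y)
        / (((atomMk 𝒢 x).1.ncard : ℕ) : ℝ))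
      have hval : ∀ x : X, (atomMk 𝒢 x).1 = orb 𝒢 x := fun x => atom_eq hid hcomp hinvcl x
      have heq : (fun x => (∑ y ∈ (atomMk 𝒢 x).1.toFinite.toFinset, f y)
          / (((atomMk 𝒢 x).1.ncard : ℕ) : ℝ))
          = fun x => (∑ π ∈ 𝒢.toFinite.toFinset, f (π x)) / ((𝒢.toFinite.toFinset.card : ℕ) : ℝ) := by
        funext x
        rw [toFinset_congr (hval x), show (atomMk 𝒢 x).1.ncard = (orb 𝒢 x).ncard from
          congrArg Set.ncard (hval x),
          Set.ncard_eq_toFinset_card (orb 𝒢 x) (orb 𝒢 x).toFinite]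
        exact avg_eq_groupavg hid hcomp hinvcl f x
      rw [heq, L_group_avg hid hL hinv f]
  · rintro ⟨L₀, hL₀, hrep⟩
    haveI : Nonempty (InvariantAtoms 𝒢) := ⟨atomMk 𝒢 (Classical.arbitrary X)⟩
    have hrep' : ∀ f : X → ℝ, L f = L₀ (avgA 𝒢 f) := hrep
    have hL0 : L₀ (0 : InvariantAtoms 𝒢 → ℝ) = 0 := L_zero' hL₀
    constructor
    · refine ⟨?_, ?_, ?_⟩
      · intro f _
        rw [hrep' f]
        refine le_trans (le_csInf (Set.range_nonempty _) ?_) (hL₀.1 _ (gamble_of_finite _))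
        rintro b ⟨A, rfl⟩
        exact avgA_lb hid hcomp hinvcl f A
      · intro f g _ _
        rw [hrep' f, hrep' g, hrep' (f + g), avgA_add]
        exact hL₀.2.1 _ _ (gamble_of_finite _) (gamble_of_finite _)
      · intro f _ c hc
        rw [hrep' f, hrep' (c • f), avgA_smul]
        exact hL₀.2.2 _ (gamble_of_finite _) c hc
    · intro f π hπ
      have hcomp0 : avgA 𝒢 (f ∘ π) = avgA 𝒢 f := avgA_comp hcomp hinvcl hid hπ f
      constructor
      · rw [hrep' (f - f ∘ π), avgA_sub, hcomp0, sub_self, hL0]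
      · rw [hrep' (f ∘ π - f), avgA_sub, hcomp0, sub_self, hL0]
end
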